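/- For every shift-invariant proper 𝔽₂-subspace V of X_0, the set G_V = { f ∈ G : ∃ n ∈ ℤ, v ∈ X_0, ∀x, f(x) ∈ σ^n(x) + v + V } is a proper subgroup of G. -/

import Mathlib

noncomputable section

/-- The full binary shift space `{0,1}^ℤ`. -/
abbrev X : Type := ℤ → ZMod 2

instance : Group (X ≃ₜ X) where
  mul f g := g.trans f
  one := Homeomorph.refl X
  inv := Homeomorph.symm
  mul_assoc f g h := rfl
  one_mul f := Homeomorph.ext fun _ => rfl
  mul_one f := Homeomorph.ext fun _ => rfl
  inv_mul_cancel f := Homeomorph.ext fun x => f.symm_apply_apply x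

/-- The shift `σ^n`, `σ^n(x)_i = x_{i+n}`. -/
def shiftPow (n : ℤ) : X ≃ₜ X where
  toFun x i := x (i + n)
  invFun x i := x (i - n)
  left_inv x := funext fun i => congrArg x (by ring)
  right_inv x := funext fun i => congrArg x (by ring)
  continuous_toFun := continuous_pi fun i => continuous_apply (i + n)
  continuous_invFun := continuous_pi fun i => continuous_apply (i - n)

/-- The shift `σ`. -/
def shiftHomeo : X ≃ₜ X := shiftPow 1

/-- A local permutation: a self-homeomorphism fixing all coordinates outside a bounded interval. -/
def IsLocalPerm (f : X ≃ₜ X) : Prop :=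
  ∃ r : ℤ, ∀ (x : X) (i : ℤ), r ≤ |i| → f x i = x i

/-- The group `G` generated by the shift and the local permutations. -/
def Ggrp : Subgroup (X ≃ₜ X) :=
  Subgroup.closure ({shiftHomeo} ∪ {f | IsLocalPerm f})

/-- Build a homeomorphism of `X` from an involutive continuous map. -/
def mkInvHomeo (F : X → X) (h : Function.Involutive F) (hc : Continuous F) : X ≃ₜ X :=
  ⟨Function.Involutive.toPerm F h, hc, hc⟩

/-! ### Auxiliary material -/

lemma char2_triple : ∀ a b : ZMod 2, a + b + b = a := by decide

lemma char2_mul : ∀ a b c d e : ZMod 2, (a + b + c) + (b + d + e) = a + d + (c + e) := by decide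

lemma char2_comb : ∀ z a b p q : ZMod 2,
    ((a + b + z) + (p + q)) + ((a + p) + (b + q)) = z := by decide

lemma char2_self : ∀ a : ZMod 2, a + a = 0 := by decide

/-- Shift-invariance for arbitrary integer shifts. -/
lemma shiftV (V : Submodule (ZMod 2) X)
    (hVs : ∀ v ∈ V, (fun i => v (i + 1)) ∈ V)
    (hVs' : ∀ v ∈ V, (fun i => v (i - 1)) ∈ V)
    (n : ℤ) (v : X) (hv : v ∈ V) : (fun i => v (i + n)) ∈ V := by
  induction n using Int.induction_on with
  | zero => simpa using hv
  | succ k ih =>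
    have h := hVs _ ih
    have : (fun i : ℤ => v (i + 1 + k)) = (fun i : ℤ => v (i + (k + 1))) := by
      funext i; exact congrArg v (by ring)
    rwa [this] at h
  | pred k ih =>
    have h := hVs' _ ih
    have : (fun i : ℤ => v (i - 1 + -k)) = (fun i : ℤ => v (i + (-k - 1))) := by
      funext i; exact congrArg v (by ring)
    rwa [this] at h

lemma shift_support_finite (c : X) (h : (Function.support c).Finite) (n : ℤ) :
    (Function.support fun i => c (i + n)).Finite := by
  apply Set.Finite.subset (h.image (fun j => j - n))
  intro i hi
  exact ⟨i + n, hi, by ring⟩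

/-- The standard basis vector. -/
def eb (a : ℤ) : X := fun i => if i = a then 1 else 0

/-- If all basis vectors are in `V`, every finitely supported vector is. -/
lemma span_all (V : Submodule (ZMod 2) X) (he : ∀ a : ℤ, eb a ∈ V) :
    ∀ w : X, (Function.support w).Finite → w ∈ V := by
  have key : ∀ s : Finset ℤ, ∀ w : X, Function.support w ⊆ ↑s → w ∈ V := by
    intro s
    induction s using Finset.induction_on with
    | empty =>
      intro w hw
      have : w = 0 := by
        funext i
        by_contra hi
        simpa using hw hi
      rw [this]; exact V.zero_mem
    | @insert a t ha ih =>
      intro w hw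
      set w' : X := fun i => if i = a then 0 else w i with hw'
      have hsub : Function.support w' ⊆ ↑t := by
        intro i hi
        simp only [Function.mem_support, hw'] at hi
        by_cases h : i = a
        · simp [h] at hi
        · have := hw (by simpa [Function.mem_support, h] using hi)
          simpa [h] using this
      have hδ : (fun i => if i = a then w a else 0) ∈ V := by
        have h01 : ∀ z : ZMod 2, z = 0 ∨ z = 1 := by decide
        rcases h01 (w a) with h | h
        · have : (fun i => if i = a then w a else 0) = (0 : X) := by
            funext i; by_cases hi : i = a <;> simp [hi, h]
          rw [this]; exact V.zero_mem
        · have : (fun i => if i = a then w a else 0) = eb a := by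
            funext i; by_cases hi : i = a <;> simp [hi, h, eb]
          rw [this]; exact he a
      have : w = w' + (fun i => if i = a then w a else 0) := by
        funext i
        by_cases hi : i = a <;> simp [hw', hi]
      rw [this]
      exact V.add_mem (ih w' hsub) hδ
  intro w hw
  exact key hw.toFinset w (by simp)

/-- The non-affine local permutation `x ↦ x + (x₁x₂)·e₀`. -/
def Fmap : X → X := fun x i => if i = 0 then x 0 + x 1 * x 2 else x i

lemma Fmap_invol : Function.Involutive Fmap := by
  intro x
  funext i
  by_cases h : i = 0
  · subst h
    show Fmap x 0 + Fmap x 1 * Fmap x 2 = x 0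
    have h1 : Fmap x 1 = x 1 := by simp [Fmap]
    have h2 : Fmap x 2 = x 2 := by simp [Fmap]
    rw [h1, h2]
    show (x 0 + x 1 * x 2) + x 1 * x 2 = x 0
    exact char2_triple _ _
  · simp [Fmap, h]

lemma Fmap_cont : Continuous Fmap := by
  apply continuous_pi
  intro i
  by_cases h : i = 0
  · subst h
    simp only [Fmap, if_pos rfl]
    exact (continuous_of_discreteTopology (f := fun p : ZMod 2 × ZMod 2 × ZMod 2 =>
      p.1 + p.2.1 * p.2.2)).comp
      (((continuous_apply (0 : ℤ) : Continuous fun x : X => x 0)).prodMk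
        ((continuous_apply (1 : ℤ) : Continuous fun x : X => x 1).prodMk
          (continuous_apply (2 : ℤ) : Continuous fun x : X => x 2)))
  · simpa only [Fmap, if_neg h] using continuous_apply i

def Fhomeo : X ≃ₜ X := mkInvHomeo Fmap Fmap_invol Fmap_cont

lemma Fhomeo_apply (x : X) : Fhomeo x = Fmap x := rfl

lemma Fhomeo_mem : Fhomeo ∈ Ggrp := by
  apply Subgroup.subset_closure
  refine Or.inr ⟨1, fun x i hi => ?_⟩
  have h : i ≠ 0 := by
    intro h; rw [h] at hi; simp at hi
  show Fmap x i = x i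
  simp [Fmap, h]

lemma Fmap_e1 : Fmap (eb 1) = eb 1 := by
  funext i
  by_cases h : i = 0 <;> simp [Fmap, eb, h]

lemma Fmap_e2 : Fmap (eb 2) = eb 2 := by
  funext i
  by_cases h : i = 0 <;> simp [Fmap, eb, h]

lemma Fmap_e12 : Fmap (eb 1 + eb 2) = eb 1 + eb 2 + eb 0 := by
  funext i
  by_cases h : i = 0 <;> simp [Fmap, eb, h]

/-- The candidate subgroup carrier. -/
abbrev GV (V : Submodule (ZMod 2) X) : Set (X ≃ₜ X) :=
  {f : X ≃ₜ X | f ∈ Ggrp ∧ ∃ (n : ℤ) (c : X), (Function.support c).Finite ∧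
    ∀ x : X, (fun i => f x i + x (i + n) + c i) ∈ V}

/-- For every shift-invariant proper `𝔽₂`-subspace `V` of the space `X₀` of finitely supported
configurations, the set `G_V` is a proper subgroup of `G`. -/
theorem stmt11 (V : Submodule (ZMod 2) X)
    (hV0 : ∀ v ∈ V, (Function.support v).Finite)
    (hVs : ∀ v ∈ V, (fun i => v (i + 1)) ∈ V)
    (hVs' : ∀ v ∈ V, (fun i => v (i - 1)) ∈ V)
    (hVproper : ∃ w : X, (Function.support w).Finite ∧ w ∉ V) :
    ∃ H : Subgroup (X ≃ₜ X),
      (H : Set (X ≃ₜ X)) =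
        {f : X ≃ₜ X | f ∈ Ggrp ∧ ∃ (n : ℤ) (c : X), (Function.support c).Finite ∧
          ∀ x : X, (fun i => f x i + x (i + n) + c i) ∈ V} ∧
      H < Ggrp := by
  have hshift := shiftV V hVs hVs'
  refine ⟨{ carrier := GV V
            one_mem' := ?_
            mul_mem' := fun {f g} hfm hgm => ?_
            inv_mem' := fun {f} hfm => ?_ }, rfl, ?_⟩
  · obtain ⟨hfG, nf, cf, hcf, hf⟩ := hfm
    obtain ⟨hgG, ng, cg, hcg, hg⟩ := hgm
    refine ⟨Ggrp.mul_mem hfG hgG, nf + ng, (fun i => cf i + cg (i + nf)), ?_, fun x => ?_⟩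
    · apply Set.Finite.subset (hcf.union (shift_support_finite cg hcg nf))
      intro i hi
      simp only [Function.mem_support] at hi
      by_cases h1 : cf i = 0
      · right
        simp only [Function.mem_support]
        intro h2
        exact hi (by rw [h1, h2, add_zero])
      · exact Or.inl h1
    · have hA := hf (g x)
      have hB := hshift nf _ (hg x)
      have hsum := V.add_mem hA hB
      have heq : (fun i => (f * g) x i + x (i + (nf + ng)) + (cf i + cg (i + nf))) =
          (fun i => f (g x) i + (g x) (i + nf) + cf i) +
          (fun i => (fun j => g x j + x (j + ng) + cg j) (i + nf)) := by
        funext i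
        show (f * g) x i + x (i + (nf + ng)) + (cf i + cg (i + nf)) =
          (f (g x) i + g x (i + nf) + cf i) + (g x (i + nf) + x (i + nf + ng) + cg (i + nf))
        have h1 : (f * g) x i = f (g x) i := rfl
        have h2 : x (i + (nf + ng)) = x (i + nf + ng) := congrArg x (by ring)
        rw [h1, h2, char2_mul]
      rw [heq]
      exact V.add_mem hA hB
  · refine ⟨Ggrp.one_mem, 0, 0, by simp, fun x => ?_⟩
    have : (fun i => (1 : X ≃ₜ X) x i + x (i + 0) + (0 : X) i) = (0 : X) := by
      funext i
      show x i + x (i + 0) + 0 = 0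
      rw [add_zero, show i + 0 = i from add_zero i]
      exact char2_self _
    rw [this]; exact V.zero_mem
  · obtain ⟨hfG, n, c, hc, hf⟩ := hfm
    refine ⟨Ggrp.inv_mem hfG, -n, (fun i => c (i + -n)), shift_support_finite c hc _, fun x => ?_⟩
    have h1 := hf (f.symm x)
    have h2 := hshift (-n) _ h1
    have heq : (fun i => f⁻¹ x i + x (i + -n) + (fun j => c (j + -n)) i) =
        (fun i => (fun j => f (f.symm x) j + (f.symm x) (j + n) + c j) (i + -n)) := by
      funext i
      show f.symm x i + x (i + -n) + c (i + -n) =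
        f (f.symm x) (i + -n) + f.symm x (i + -n + n) + c (i + -n)
      rw [f.apply_symm_apply]
      have h3 : i + -n + n = i := by ring
      rw [h3]
      ring
    rw [heq]
    exact h2
  · rw [SetLike.lt_iff_le_and_exists]
    refine ⟨fun f hf => hf.1, Fhomeo, Fhomeo_mem, ?_⟩
    rintro ⟨-, n, c, hcfin, hP⟩
    obtain ⟨w, hwfin, hwV⟩ := hVproper
    apply hwV
    -- step 1: c ∈ V
    have hc : c ∈ V := by
      have h0 := hP 0
      have : (fun i => Fhomeo (0 : X) i + (0 : X) (i + n) + c i) = c := by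
        funext i
        show Fmap 0 i + (0 : X) (i + n) + c i = c i
        by_cases h : i = 0 <;> simp [Fmap, h]
      rwa [this] at h0
    -- step 2: homogeneous part
    have hQ : ∀ x : X, (fun i => Fmap x i + x (i + n)) ∈ V := by
      intro x
      have := V.add_mem (hP x) hc
      have heq : (fun i => Fhomeo x i + x (i + n) + c i) + c =
          (fun i => Fmap x i + x (i + n)) := by
        funext i
        show (Fmap x i + x (i + n) + c i) + c i = Fmap x i + x (i + n)
        exact char2_triple _ _
      rwa [heq] at this
    -- step 3: e 0 ∈ V
    have he0 : eb 0 ∈ V := by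
      have h1 := hQ (eb 1)
      have h2 := hQ (eb 2)
      have h12 := hQ (eb 1 + eb 2)
      have hsum := V.add_mem h12 (V.add_mem h1 h2)
      have heq : (fun i => Fmap (eb 1 + eb 2) i + (eb 1 + eb 2) (i + n)) +
          ((fun i => Fmap (eb 1) i + (eb 1) (i + n)) +
           (fun i => Fmap (eb 2) i + (eb 2) (i + n))) = eb 0 := by
        funext i
        show (Fmap (eb 1 + eb 2) i + (eb 1 + eb 2) (i + n)) +
          ((Fmap (eb 1) i + eb 1 (i + n)) + (Fmap (eb 2) i + eb 2 (i + n))) = eb 0 i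
        rw [Fmap_e1, Fmap_e2, Fmap_e12]
        show ((eb 1 i + eb 2 i + eb 0 i) + (eb 1 (i + n) + eb 2 (i + n))) +
          ((eb 1 i + eb 1 (i + n)) + (eb 2 i + eb 2 (i + n))) = eb 0 i
        exact char2_comb _ _ _ _ _
      rwa [heq] at hsum
    -- step 4: every basis vector is in V
    have hea : ∀ a : ℤ, eb a ∈ V := by
      intro a
      have h := hshift (-a) _ he0
      have : (fun i => eb 0 (i + -a)) = eb a := by
        funext i
        by_cases hi : i = a
        · subst hi; simp [eb]
        · show (if i + -a = 0 then (1 : ZMod 2) else 0) = (if i = a then 1 else 0)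
          rw [if_neg (by omega), if_neg hi]
      rwa [this] at h
    exact span_all V hea w hwfin
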